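/- Let G = (X, E) be an undirected s-regular graph with s ≥ 1, suppose α_x = a and β_x = b for every x ∈ X with 1 ≤ a ≤ b and s dividing a, and consider the specific functional Ψ with constants C^{all} > 0, C^{agg} < 0, C^{con} > 0 (the same C^{con} for every resource). Then the diffused allocation state W* defined by W*_{xy} = a/s if (x,y) ∈ E and W*_{xy} = 0 otherwise is the unique maximizer of Ψ over the set 𝒲 of allocation states. -/
import Mathlib

open Finset

/-- A partial allocation state: `W x y` is zero off the edge set, row sums are
bounded by `α` and column sums are bounded by `β`. -/
def IsPartialAlloc {X : Type*} [Fintype X] (E : X → X → Prop) (α β : X → ℕ)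
    (W : X → X → ℕ) : Prop :=
  (∀ x y, ¬ E x y → W x y = 0) ∧
  (∀ x, ∑ y, W x y ≤ α x) ∧
  (∀ y, ∑ x, W x y ≤ β y)

/-- An allocation state: a partial allocation state whose row sums equal `α`. -/
def IsAlloc {X : Type*} [Fintype X] (E : X → X → Prop) (α β : X → ℕ)
    (W : X → X → ℕ) : Prop :=
  IsPartialAlloc E α β W ∧ ∀ x, ∑ y, W x y = α x

/-- The specific functional
`Ψ(W) = Σ_x (C^{all} Σ_y W_{xy} + C^{agg} Σ_y W_{xy}²) − Σ_y C^{con}(Σ_x W_{xy})²`. -/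
def PsiSpec {X : Type*} [Fintype X] (Call Cagg Ccon : ℝ) (W : X → X → ℕ) : ℝ :=
  ∑ x, (Call * ∑ y, (W x y : ℝ) + Cagg * ∑ y, (W x y : ℝ) ^ 2) -
    ∑ y, Ccon * (∑ x, (W x y : ℝ)) ^ 2

/-- Auxiliary: expansion of a sum of squares around a mean value. -/
lemma sq_sum_expand_aux {X : Type*} (T : Finset X) (g : X → ℝ) (m : ℝ)
    (hsum : ∑ y ∈ T, g y = T.card * m) :
    ∑ y ∈ T, (g y) ^ 2 = (T.card : ℝ) * m ^ 2 + ∑ y ∈ T, (g y - m) ^ 2 := by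
  have h1 : ∀ y, (g y - m) ^ 2 = (g y) ^ 2 - 2 * m * (g y) + m ^ 2 := fun y => by ring
  have h2 : ∑ y ∈ T, (g y - m) ^ 2
      = (∑ y ∈ T, (g y) ^ 2) - 2 * m * (∑ y ∈ T, g y) + T.card * m ^ 2 := by
    simp only [h1]
    rw [Finset.sum_add_distrib, Finset.sum_sub_distrib, ← Finset.mul_sum,
      Finset.sum_const, nsmul_eq_mul]
  rw [h2, hsum]; ring

/-- on an undirected `s`-regular graph with `α ≡ a`, `β ≡ b`,
`1 ≤ a ≤ b`, `s ∣ a`, and constants `C^{all} > 0`, `C^{agg} < 0`,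
`C^{con} > 0`, the diffused allocation state `W*_{xy} = a/s` on edges and `0`
elsewhere is the unique maximizer of `Ψ` over the set of allocation states. -/
theorem diffused_unique_maximizer {X : Type*} [Fintype X] [DecidableEq X]
    (E : X → X → Prop) [DecidableRel E] (s : ℕ) (hs : 1 ≤ s)
    (hsym : ∀ x y, E x y → E y x) (hirr : ∀ x, ¬ E x x)
    (hreg : ∀ x, (univ.filter fun y => E x y).card = s)
    (a b : ℕ) (ha : 1 ≤ a) (hab : a ≤ b) (hdvd : s ∣ a)
    (Call Cagg Ccon : ℝ) (hCall : 0 < Call) (hCagg : Cagg < 0) (hCcon : 0 < Ccon) :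
    IsAlloc E (fun _ => a) (fun _ => b)
        (fun x y => if E x y then a / s else 0) ∧
      ∀ W : X → X → ℕ, IsAlloc E (fun _ => a) (fun _ => b) W →
        W ≠ (fun x y => if E x y then a / s else 0) →
        PsiSpec Call Cagg Ccon W <
          PsiSpec Call Cagg Ccon (fun x y => if E x y then a / s else 0) := by
  set m : ℕ := a / s with hm_def
  have hm : s * m = a := Nat.mul_div_cancel' hdvd
  have hmr : (s : ℝ) * (m : ℝ) = (a : ℝ) := by exact_mod_cast congrArg (Nat.cast (R := ℝ)) hm
  -- the column filter also has cardinality s (symmetry)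
  have hcol_card : ∀ y, (univ.filter fun x => E x y).card = s := by
    intro y
    have h : (univ.filter fun x => E x y) = (univ.filter fun x => E y x) := by
      apply Finset.filter_congr
      intro x _
      exact ⟨hsym x y, hsym y x⟩
    rw [h, hreg]
  -- row and column sums of the diffused state
  have hrow_star : ∀ x, ∑ y, (if E x y then m else 0) = a := by
    intro x
    rw [← Finset.sum_filter, Finset.sum_const, hreg, smul_eq_mul, hm]
  have hcol_star : ∀ y, ∑ x, (if E x y then m else 0) = a := by
    intro y
    rw [← Finset.sum_filter, Finset.sum_const, hcol_card, smul_eq_mul, hm]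
  -- Ψ in split form
  have psi_eq : ∀ V : X → X → ℕ, PsiSpec Call Cagg Ccon V =
      Call * (∑ x, ∑ y, (V x y : ℝ)) + Cagg * (∑ x, ∑ y, (V x y : ℝ) ^ 2)
        - Ccon * (∑ y, (∑ x, (V x y : ℝ)) ^ 2) := by
    intro V
    unfold PsiSpec
    rw [Finset.sum_add_distrib, ← Finset.mul_sum, ← Finset.mul_sum, ← Finset.mul_sum]
  constructor
  · exact ⟨⟨fun x y h => if_neg h, fun x => le_of_eq (hrow_star x),
      fun y => le_trans (le_of_eq (hcol_star y)) hab⟩, fun x => hrow_star x⟩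
  · intro W hW hne
    obtain ⟨⟨hW0, _, _⟩, hWrow⟩ := hW
    -- real row sums of W
    have hWrowR : ∀ x, ∑ y, (W x y : ℝ) = (a : ℝ) := by
      intro x
      rw [← Nat.cast_sum]
      exact_mod_cast congrArg (Nat.cast (R := ℝ)) (hWrow x)
    -- restrict row sums to the neighborhood
    have hrowT : ∀ x, ∑ y ∈ univ.filter (fun y => E x y), (W x y : ℝ)
        = ((univ.filter (fun y => E x y)).card : ℝ) * (m : ℝ) := by
      intro x
      rw [Finset.sum_subset (Finset.subset_univ _) (fun y _ hy => by
        have hnot : ¬ E x y := by simpa using hy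
        exact_mod_cast hW0 x y hnot), hWrowR x, hreg]
      exact hmr.symm
    have hsqT : ∀ x, ∑ y, (W x y : ℝ) ^ 2
        = ∑ y ∈ univ.filter (fun y => E x y), (W x y : ℝ) ^ 2 := by
      intro x
      refine (Finset.sum_subset (Finset.subset_univ _) (fun y _ hy => ?_)).symm
      have hnot : ¬ E x y := by simpa using hy
      rw [hW0 x y hnot]
      norm_num
    -- each row's sum of squares is at least s·m²
    have hrow_ge : ∀ x, (s : ℝ) * (m : ℝ) ^ 2 ≤ ∑ y, (W x y : ℝ) ^ 2 := by
      intro x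
      rw [hsqT x, sq_sum_expand_aux _ _ _ (hrowT x), hreg]
      have h0 : (0:ℝ) ≤ ∑ y ∈ univ.filter (fun y => E x y), ((W x y : ℝ) - m) ^ 2 :=
        Finset.sum_nonneg fun i _ => sq_nonneg _
      linarith
    -- strictness at a point where W differs from W*
    have hx : ∃ x y, W x y ≠ (if E x y then m else 0) := by
      by_contra h
      push_neg at h
      exact hne (funext fun x => funext fun y => h x y)
    obtain ⟨x₀, y₀, hxy⟩ := hx
    have hE0 : E x₀ y₀ := by
      by_contra h
      rw [hW0 x₀ y₀ h, if_neg h] at hxy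
      exact hxy rfl
    have hne_m : (W x₀ y₀ : ℝ) ≠ (m : ℝ) := by
      rw [if_pos hE0] at hxy
      exact_mod_cast hxy
    have hrow_strict : (s : ℝ) * (m : ℝ) ^ 2 < ∑ y, (W x₀ y : ℝ) ^ 2 := by
      rw [hsqT x₀, sq_sum_expand_aux _ _ _ (hrowT x₀), hreg]
      have hpos : (0:ℝ) < ∑ y ∈ univ.filter (fun y => E x₀ y), ((W x₀ y : ℝ) - m) ^ 2 := by
        refine Finset.sum_pos' (fun i _ => sq_nonneg _) ⟨y₀, ?_, ?_⟩
        · simp [Finset.mem_filter, hE0]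
        · exact lt_of_le_of_ne (sq_nonneg _)
            (Ne.symm (pow_ne_zero 2 (sub_ne_zero.mpr hne_m)))
      linarith
    -- aggregate square comparison
    have hA : ∑ _x : X, ((s : ℝ) * (m : ℝ) ^ 2) < ∑ x, ∑ y, (W x y : ℝ) ^ 2 :=
      Finset.sum_lt_sum (fun i _ => hrow_ge i) ⟨x₀, Finset.mem_univ _, hrow_strict⟩
    have hAstar : ∑ x, ∑ y, ((if E x y then m else 0 : ℕ) : ℝ) ^ 2
        = ∑ _x : X, ((s : ℝ) * (m : ℝ) ^ 2) := by
      refine Finset.sum_congr rfl fun x _ => ?_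
      have h1 : ∀ y, ((if E x y then m else 0 : ℕ) : ℝ) ^ 2
          = if E x y then (m : ℝ) ^ 2 else 0 := by
        intro y; split <;> simp
      simp only [h1]
      rw [← Finset.sum_filter, Finset.sum_const, hreg, nsmul_eq_mul]
    -- column sums comparison
    have hcsum : ∑ y, (∑ x, (W x y : ℝ)) = ((univ : Finset X).card : ℝ) * (a : ℝ) := by
      rw [Finset.sum_comm]
      simp only [hWrowR]
      rw [Finset.sum_const, nsmul_eq_mul]
    have hB : ∑ _y : X, ((a : ℝ)) ^ 2 ≤ ∑ y, (∑ x, (W x y : ℝ)) ^ 2 := by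
      rw [sq_sum_expand_aux univ _ (a : ℝ) hcsum, Finset.sum_const, nsmul_eq_mul]
      have h0 : (0:ℝ) ≤ ∑ y, ((∑ x, (W x y : ℝ)) - a) ^ 2 :=
        Finset.sum_nonneg fun i _ => sq_nonneg _
      linarith
    -- the sums of W* in real form
    have hS1star : ∑ x, ∑ y, ((if E x y then m else 0 : ℕ) : ℝ) = ∑ _x : X, (a : ℝ) := by
      refine Finset.sum_congr rfl fun x _ => ?_
      rw [← Nat.cast_sum]
      exact_mod_cast congrArg (Nat.cast (R := ℝ)) (hrow_star x)
    have hBstar : ∑ y, (∑ x, ((if E x y then m else 0 : ℕ) : ℝ)) ^ 2 = ∑ _y : X, ((a : ℝ)) ^ 2 := by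
      refine Finset.sum_congr rfl fun y _ => ?_
      congr 1
      rw [← Nat.cast_sum]
      exact_mod_cast congrArg (Nat.cast (R := ℝ)) (hcol_star y)
    have hS1W : ∑ x, ∑ y, (W x y : ℝ) = ∑ _x : X, (a : ℝ) :=
      Finset.sum_congr rfl fun x _ => hWrowR x
    rw [psi_eq W, psi_eq (fun x y => if E x y then m else 0)]
    rw [hS1star, hAstar, hBstar, hS1W]
    have h1 := mul_lt_mul_of_neg_left hA hCagg
    have h2 := mul_le_mul_of_nonneg_left hB hCcon.le
    linarith
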